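/- Let X₁, …, X_d be independent identically distributed real random variables with E X₁ = 0, E X₁² = 1 and E X₁⁴ < ∞, and let μ be the distribution of X = (X₁,…,X_d)ᵀ in ℝ^d. Then for all symmetric matrices A ∈ ℝ^{d×d}_sym, T_μ(A) = 2A + Tr(A)·I + (E X₁⁴ − 3)·diag(A), where diag(A) is the diagonal matrix whose diagonal entries agree with those of A. -/

import Mathlib

open MeasureTheory
open scoped ENNReal RealInnerProductSpace Classical

noncomputable section

/-- The outer product `x xᵀ` of a vector in Euclidean space, as a matrix. -/
def outer {d : ℕ} (x : EuclideanSpace ℝ (Fin d)) : Matrix (Fin d) (Fin d) ℝ :=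
  Matrix.of fun i j => x i * x j

/-- The trace inner product `⟨A, B⟩ = Tr (A B)` on symmetric matrices. -/
def minner {d : ℕ} (A B : Matrix (Fin d) (Fin d) ℝ) : ℝ :=
  Matrix.trace (A * B)

/-- The Frobenius norm of a matrix. -/
def frobNorm {d : ℕ} (M : Matrix (Fin d) (Fin d) ℝ) : ℝ :=
  Real.sqrt (∑ i, ∑ j, (M i j) ^ 2)

/-- Entrywise integral of a matrix-valued function. -/
def mIntegral {d : ℕ} (μ : Measure (EuclideanSpace ℝ (Fin d)))
    (F : EuclideanSpace ℝ (Fin d) → Matrix (Fin d) (Fin d) ℝ) :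
    Matrix (Fin d) (Fin d) ℝ :=
  Matrix.of fun i j => ∫ x, F x i j ∂μ

/-- The fourth moment operator `T_μ (A) = ∫ ⟨A, xxᵀ⟩ xxᵀ dμ(x)`. -/
def fourthMomentOp {d : ℕ} (μ : Measure (EuclideanSpace ℝ (Fin d)))
    (A : Matrix (Fin d) (Fin d) ℝ) : Matrix (Fin d) (Fin d) ℝ :=
  mIntegral μ (fun x => minner A (outer x) • outer x)

/-- The second moment matrix `B = ∫ xxᵀ dμ(x)`. -/
def secondMoment {d : ℕ} (μ : Measure (EuclideanSpace ℝ (Fin d))) :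
    Matrix (Fin d) (Fin d) ℝ :=
  mIntegral μ outer

/-- `lam : ℕ → ℝ` lists the eigenvalues (with multiplicity) of the fourth moment operator
`T_μ`, viewed as an operator on the `d(d+1)/2`-dimensional inner product space of symmetric
matrices, in descending order, padded by `0` beyond index `d(d+1)/2`. -/
def IsEigenSeq {d : ℕ} (μ : Measure (EuclideanSpace ℝ (Fin d))) (lam : ℕ → ℝ) : Prop :=
  Antitone lam ∧ (∀ i, d * (d + 1) / 2 ≤ i → lam i = 0) ∧
  ∃ b : Fin (d * (d + 1) / 2) → Matrix (Fin d) (Fin d) ℝ,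
    (∀ i, (b i).IsSymm) ∧
    (∀ i j, minner (b i) (b j) = if i = j then 1 else 0) ∧
    (∀ A : Matrix (Fin d) (Fin d) ℝ, A.IsSymm → A ∈ Submodule.span ℝ (Set.range b)) ∧
    (∀ i : Fin (d * (d + 1) / 2), fourthMomentOp μ (b i) = lam i • b i)

/-- The second order separation parameter `s(μ)`. -/
def sep {d : ℕ} (μ : Measure (EuclideanSpace ℝ (Fin d))) : ℝ :=
  (1 / 2) * sSup { r : ℝ | ∃ μ₁ μ₂ : Measure (EuclideanSpace ℝ (Fin d)),
    IsProbabilityMeasure μ₁ ∧ IsProbabilityMeasure μ₂ ∧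
    μ = (2 : ℝ≥0∞)⁻¹ • μ₁ + (2 : ℝ≥0∞)⁻¹ • μ₂ ∧
    r = frobNorm (secondMoment μ₁ - secondMoment μ₂) }

/-- The standard Gaussian measure `N(0, I)` on `ℝ^d`. -/
def stdGaussian (d : ℕ) : Measure (EuclideanSpace ℝ (Fin d)) :=
  (Measure.pi fun _ : Fin d => ProbabilityTheory.gaussianReal 0 1).map
    (MeasurableEquiv.toLp 2 (Fin d → ℝ))

/-- The centered Gaussian measure `N(0, B)` on `ℝ^d` with positive semidefinite
covariance matrix `B`, obtained as the pushforward of `N(0, I)` by `B^{1/2}`. -/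
def gaussianCov {d : ℕ} (B : Matrix (Fin d) (Fin d) ℝ) :
    Measure (EuclideanSpace ℝ (Fin d)) :=
  if hB : B.PosSemidef then (stdGaussian d).map (fun x => Matrix.toEuclideanLin (hB.1.eigenvectorUnitary.1 * Matrix.diagonal ((RCLike.ofReal : ℝ → ℝ) ∘ Real.sqrt ∘ hB.1.eigenvalues) *
      (star hB.1.eigenvectorUnitary : Matrix (Fin d) (Fin d) ℝ)) x)
  else 0

/-- The positive semidefinite square root `B^{1/2}` of a positive semidefinite matrix. -/
def psdSqrt {d : ℕ} (B : Matrix (Fin d) (Fin d) ℝ) : Matrix (Fin d) (Fin d) ℝ :=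
  if hB : B.PosSemidef then (hB.1.eigenvectorUnitary.1 * Matrix.diagonal ((RCLike.ofReal : ℝ → ℝ) ∘ Real.sqrt ∘ hB.1.eigenvalues) *
      (star hB.1.eigenvectorUnitary : Matrix (Fin d) (Fin d) ℝ)) else 0

lemma pi_integral_prod' {ι E : Type*} [Fintype ι] [MeasurableSpace E] (ν : Measure E)
    [SigmaFinite ν] (f : ι → E → ℝ) :
    ∫ y : ι → E, ∏ m, f m (y m) ∂(Measure.pi fun _ => ν) = ∏ m, ∫ t, f m t ∂ν := by
  letI : MeasureSpace E := ⟨ν⟩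
  have : (Measure.pi fun _ : ι => ν) = (volume : Measure (ι → E)) := (volume_pi).symm
  rw [this]
  exact MeasureTheory.integral_fintype_prod_volume_eq_prod f

lemma pi_integrable_prod' {ι E : Type*} [Fintype ι] [MeasurableSpace E] (ν : Measure E)
    [SigmaFinite ν] (f : ι → E → ℝ) (hf : ∀ i, Integrable (f i) ν) :
    Integrable (fun y : ι → E => ∏ m, f m (y m)) (Measure.pi fun _ => ν) := by
  letI : MeasureSpace E := ⟨ν⟩
  have : (Measure.pi fun _ : ι => ν) = (volume : Measure (ι → E)) := (volume_pi).symm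
  rw [this]
  exact MeasureTheory.Integrable.fintype_prod hf

lemma integrable_pow_le' {ν : Measure ℝ} [IsProbabilityMeasure ν]
    (h4 : Integrable (fun x : ℝ => x ^ 4) ν) {n : ℕ} (hn : n ≤ 4) :
    Integrable (fun x : ℝ => x ^ n) ν := by
  have hb : Integrable (fun x : ℝ => x ^ 4 + 1) ν := h4.add (integrable_const 1)
  refine hb.mono' ((measurable_id.pow_const n).aestronglyMeasurable) ?_
  filter_upwards with x
  have hx4 : (0:ℝ) ≤ x ^ 4 := by positivity
  rw [Real.norm_eq_abs, abs_pow]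
  rcases le_or_gt |x| 1 with h | h
  · have h1 : |x| ^ n ≤ 1 := pow_le_one₀ (abs_nonneg x) h
    nlinarith
  · have h1 : |x| ^ n ≤ |x| ^ 4 := pow_le_pow_right₀ h.le hn
    have h2 : |x| ^ 4 = x ^ 4 := by rw [← abs_pow, abs_of_nonneg hx4]
    nlinarith

lemma outer_rep' {d : ℕ} (k l i j : Fin d) (y : Fin d → ℝ) :
    y k * y l * y i * y j =
      ∏ m, y m ^ ((if k = m then 1 else 0) + (if l = m then 1 else 0) +
        (if i = m then 1 else 0) + (if j = m then 1 else 0)) := by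
  have h1 : ∀ a : Fin d, ∏ m, y m ^ (if a = m then 1 else 0) = y a := by
    intro a
    simp [pow_ite, Finset.prod_ite_eq]
  simp only [pow_add, Finset.prod_mul_distrib, h1]

lemma integrable_four' (ν : Measure ℝ) [IsProbabilityMeasure ν]
    (h4 : Integrable (fun x : ℝ => x ^ 4) ν) {d : ℕ} (k l i j : Fin d) :
    Integrable (fun y : Fin d → ℝ => y k * y l * y i * y j)
      (Measure.pi fun _ => ν) := by
  have hrep : (fun y : Fin d → ℝ => y k * y l * y i * y j)
      = fun y => ∏ m, y m ^ ((if k = m then 1 else 0) + (if l = m then 1 else 0) +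
        (if i = m then 1 else 0) + (if j = m then 1 else 0)) := by
    funext y; exact outer_rep' k l i j y
  rw [hrep]
  refine pi_integrable_prod' ν _ fun m => integrable_pow_le' h4 ?_
  by_cases h1 : k = m <;> by_cases h2 : l = m <;> by_cases h3 : i = m <;>
    by_cases h4 : j = m <;> simp [h1, h2, h3, h4]

lemma E4' (ν : Measure ℝ) [IsProbabilityMeasure ν]
    (hmean : ∫ x, x ∂ν = 0) (hvar : ∫ x, x ^ 2 ∂ν = 1)
    {d : ℕ} (k l i j : Fin d) :
    ∫ y : Fin d → ℝ, y k * y l * y i * y j ∂(Measure.pi fun _ => ν) =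
      (if k = l then (1:ℝ) else 0) * (if i = j then 1 else 0)
      + (if k = i then (1:ℝ) else 0) * (if l = j then 1 else 0)
      + (if k = j then (1:ℝ) else 0) * (if l = i then 1 else 0)
      + (if k = l ∧ l = i ∧ i = j then (∫ x, x ^ 4 ∂ν) - 3 else 0) := by
  set e : Fin d → ℕ := fun m => (if k = m then 1 else 0) + (if l = m then 1 else 0) +
    (if i = m then 1 else 0) + (if j = m then 1 else 0) with he
  have hrep : (fun y : Fin d → ℝ => y k * y l * y i * y j)
      = fun y => ∏ m, y m ^ e m := by
    funext y; exact outer_rep' k l i j y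
  rw [hrep, pi_integral_prod' ν (fun m t => t ^ e m)]
  have hM0 : (∫ t : ℝ, t ^ 0 ∂ν) = 1 := by simp
  have hM1 : (∫ t : ℝ, t ^ 1 ∂ν) = 0 := by simpa using hmean
  have zero_of : ∀ w : Fin d, e w = 1 → (∏ m, ∫ t, t ^ e m ∂ν) = 0 := by
    intro w hw
    exact Finset.prod_eq_zero (Finset.mem_univ w) (by rw [hw, hM1])
  by_cases hkl : k = l <;> by_cases hij : i = j
  · subst hkl; subst hij
    by_cases hki : k = i
    · subst hki
      have hprod : (∏ m, ∫ t, t ^ e m ∂ν) = ∫ t : ℝ, t ^ 4 ∂ν := by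
        have : ∀ m, (∫ t, t ^ e m ∂ν) = if k = m then ∫ t : ℝ, t ^ 4 ∂ν else 1 := by
          intro m
          by_cases h : k = m
          · simp [he, h]
          · simp [he, h, hM0]
        rw [Finset.prod_congr rfl (fun m _ => this m), Finset.prod_ite_eq]
        simp
      rw [hprod]; simp; ring
    · have hik : ¬ i = k := fun h => hki h.symm
      have hprod : (∏ m, ∫ t, t ^ e m ∂ν) = 1 := by
        refine Finset.prod_eq_one fun m _ => ?_
        by_cases h1 : k = m
        · have : ¬ i = m := fun h => hki (h1.trans h.symm)
          simp [he, h1, this, hvar]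
        · by_cases h2 : i = m
          · simp [he, h1, h2, hvar]
          · simp [he, h1, h2, hM0]
      rw [hprod]; simp [hki]
  · -- k = l, i ≠ j
    subst hkl
    have hz : (∏ m, ∫ t, t ^ e m ∂ν) = 0 := by
      by_cases hkj : k = j
      · refine zero_of i ?_
        have h1 : ¬ k = i := fun h => hij (h.symm.trans hkj)
        have h2 : ¬ j = i := fun h => hij h.symm
        simp [he, h1, h2]
      · refine zero_of j ?_
        have h1 : ¬ i = j := hij
        simp [he, hkj, h1]
    rw [hz]
    by_cases hki : k = i
    · have hkj : ¬ k = j := fun h => hij (hki.symm.trans h)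
      simp [hij, hki, hkj]
    · simp [hij, hki]
  · -- k ≠ l, i = j
    subst hij
    have hz : (∏ m, ∫ t, t ^ e m ∂ν) = 0 := by
      by_cases hki : k = i
      · refine zero_of l ?_
        have h1 : ¬ i = l := fun h => hkl (hki.trans h)
        have h2 : ¬ k = l := hkl
        simp [he, h1, h2]
      · refine zero_of k ?_
        have h1 : ¬ l = k := fun h => hkl h.symm
        have h2 : ¬ i = k := fun h => hki h.symm
        simp [he, h1, h2]
    rw [hz]
    by_cases hki : k = i
    · have hli : ¬ l = i := fun h => hkl (hki.trans h.symm)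
      have hil : ¬ i = l := fun h => hli h.symm
      simp [hkl, hki, hli, hil]
    · simp [hkl, hki]
  · -- k ≠ l, i ≠ j
    by_cases h1 : k = i ∧ l = j
    · obtain ⟨h1a, h1b⟩ := h1; subst h1a; subst h1b
      have hprod : (∏ m, ∫ t, t ^ e m ∂ν) = 1 := by
        refine Finset.prod_eq_one fun m _ => ?_
        by_cases ha : k = m
        · have : ¬ l = m := fun h => hkl (ha.trans h.symm)
          simp [he, ha, this, hvar]
        · by_cases hb : l = m
          · simp [he, ha, hb, hvar]
          · simp [he, ha, hb, hM0]
      rw [hprod]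
      simp [hkl, hij]
    · by_cases h2 : k = j ∧ l = i
      · obtain ⟨h2a, h2b⟩ := h2; subst h2a; subst h2b
        have hprod : (∏ m, ∫ t, t ^ e m ∂ν) = 1 := by
          refine Finset.prod_eq_one fun m _ => ?_
          by_cases ha : k = m
          · have : ¬ l = m := fun h => hkl (ha.trans h.symm)
            simp [he, ha, this, hvar]
          · by_cases hb : l = m
            · simp [he, ha, hb, hvar]
            · simp [he, ha, hb, hM0]
        rw [hprod]
        have hlk : ¬ l = k := fun h => hkl h.symm
        simp [hkl, hlk, hij]
      · have hz : (∏ m, ∫ t, t ^ e m ∂ν) = 0 := by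
          by_cases hki : k = i
          · refine zero_of l ?_
            have hlj : ¬ l = j := fun h => h1 ⟨hki, h⟩
            have hil : ¬ i = l := fun h => hkl (hki.trans h)
            have hjl : ¬ j = l := fun h => hlj h.symm
            simp [he, hkl, hil, hjl]
          · by_cases hkj : k = j
            · refine zero_of l ?_
              have hli : ¬ l = i := fun h => h2 ⟨hkj, h⟩
              have hil : ¬ i = l := fun h => hli h.symm
              have hjl : ¬ j = l := fun h => hkl (hkj.trans h)
              simp [he, hkl, hil, hjl]
            · refine zero_of k ?_
              have ha : ¬ l = k := fun h => hkl h.symm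
              have hb : ¬ i = k := fun h => hki h.symm
              have hc : ¬ j = k := fun h => hkj h.symm
              simp [he, ha, hb, hc]
        rw [hz]
        by_cases hki : k = i
        · have hlj : ¬ l = j := fun h => h1 ⟨hki, h⟩
          simp [hkl, hij, hki, hlj]
        · by_cases hkj : k = j
          · have hli : ¬ l = i := fun h => h2 ⟨hkj, h⟩
            have hji : ¬ j = i := fun h => hij h.symm
            simp [hkl, hij, hki, hkj, hli, hji]
          · simp [hkl, hij, hki, hkj]


/-- for `μ` the distribution of a vector with i.i.d. coordinates of mean `0`,
variance `1` and fourth moment `m₄`, one has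
`T_μ(A) = 2A + Tr(A)·I + (m₄ - 3)·diag(A)` for all symmetric `A`. -/
theorem fourthMomentOp_iid
    (d : ℕ) (ν : Measure ℝ) [IsProbabilityMeasure ν]
    (hmean : ∫ x, x ∂ν = 0) (hvar : ∫ x, x ^ 2 ∂ν = 1)
    (h4 : Integrable (fun x : ℝ => x ^ 4) ν)
    (A : Matrix (Fin d) (Fin d) ℝ) (hA : A.IsSymm) :
    fourthMomentOp
        ((Measure.pi fun _ : Fin d => ν).map (MeasurableEquiv.toLp 2 (Fin d → ℝ)))
        A =
      (2 : ℝ) • A + Matrix.trace A • (1 : Matrix (Fin d) (Fin d) ℝ) +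
        ((∫ x, x ^ 4 ∂ν) - 3) • Matrix.diagonal (fun i => A i i) := by
  ext i j
  have h1 : fourthMomentOp
        ((Measure.pi fun _ : Fin d => ν).map (MeasurableEquiv.toLp 2 (Fin d → ℝ)))
        A i j =
      ∫ y : Fin d → ℝ, (∑ a, ∑ b, A a b * (y b * y a)) * (y i * y j)
        ∂(Measure.pi fun _ : Fin d => ν) := by
    have h0 : fourthMomentOp
          ((Measure.pi fun _ : Fin d => ν).map (MeasurableEquiv.toLp 2 (Fin d → ℝ)))
          A i j =
        ∫ x, minner A (outer x) * (x i * x j)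
          ∂((Measure.pi fun _ : Fin d => ν).map
            (MeasurableEquiv.toLp 2 (Fin d → ℝ))) := rfl
    rw [h0, MeasureTheory.integral_map_equiv]
    rfl
  rw [h1]
  have h2 : (fun y : Fin d → ℝ => (∑ a, ∑ b, A a b * (y b * y a)) * (y i * y j))
      = fun y => ∑ a, ∑ b, A a b * (y b * y a * y i * y j) := by
    funext y
    rw [Finset.sum_mul]
    refine Finset.sum_congr rfl fun a _ => ?_
    rw [Finset.sum_mul]
    exact Finset.sum_congr rfl fun b _ => by ring
  rw [h2]
  have hint : ∀ a b : Fin d, Integrable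
      (fun y : Fin d → ℝ => A a b * (y b * y a * y i * y j)) (Measure.pi fun _ => ν) :=
    fun a b => (integrable_four' ν h4 b a i j).const_mul _
  rw [integral_finset_sum _ fun a _ => integrable_finset_sum _ fun b _ => hint a b]
  simp_rw [integral_finset_sum _ fun b (_ : b ∈ Finset.univ) => hint _ b,
    MeasureTheory.integral_const_mul, E4' ν hmean hvar]
  -- now pure algebra
  have hRHS : ((2 : ℝ) • A + Matrix.trace A • (1 : Matrix (Fin d) (Fin d) ℝ) +
      ((∫ x, x ^ 4 ∂ν) - 3) • Matrix.diagonal (fun i => A i i)) i j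
      = 2 * A i j + Matrix.trace A * (if i = j then 1 else 0) +
        ((∫ x, x ^ 4 ∂ν) - 3) * (if i = j then A i i else 0) := by
    simp [Matrix.add_apply, Matrix.smul_apply, Matrix.one_apply, Matrix.diagonal_apply,
      smul_eq_mul, mul_ite, mul_zero]
  rw [hRHS]
  by_cases hij : i = j
  · subst hij
    have hsimp : ∀ a b : Fin d,
        A a b * ((if b = a then (1:ℝ) else 0) * (if i = i then 1 else 0)
          + (if b = i then (1:ℝ) else 0) * (if a = i then 1 else 0)
          + (if b = i then (1:ℝ) else 0) * (if a = i then 1 else 0)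
          + (if b = a ∧ a = i ∧ i = i then (∫ x, x ^ 4 ∂ν) - 3 else 0))
        = (if b = a then A a b else 0)
          + (if b = i then (if a = i then (2 + ((∫ x, x ^ 4 ∂ν) - 3)) * A a b else 0)
              else 0) := by
      intro a b
      by_cases h1 : b = a <;> by_cases h2 : b = i <;> by_cases h3 : a = i <;>
        subst_vars <;> (try simp_all) <;> (try ring)
    rw [Finset.sum_congr rfl fun a (_ : a ∈ Finset.univ) =>
      Finset.sum_congr rfl fun b (_ : b ∈ Finset.univ) => hsimp a b]
    simp only [Finset.sum_add_distrib, Finset.sum_ite_eq', Finset.mem_univ, if_true]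
    simp [Matrix.trace, Matrix.diag]
    ring
  · have hsimp : ∀ a b : Fin d,
        A a b * ((if b = a then (1:ℝ) else 0) * (if i = j then 1 else 0)
          + (if b = i then (1:ℝ) else 0) * (if a = j then 1 else 0)
          + (if b = j then (1:ℝ) else 0) * (if a = i then 1 else 0)
          + (if b = a ∧ a = i ∧ i = j then (∫ x, x ^ 4 ∂ν) - 3 else 0))
        = (if b = i then (if a = j then A a b else 0) else 0)
          + (if b = j then (if a = i then A a b else 0) else 0) := by
      intro a b
      have hij' : ¬ j = i := fun h => hij h.symm
      by_cases h2 : b = i <;> by_cases h3 : a = j <;> by_cases h4 : b = j <;>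
        by_cases h5 : a = i <;> subst_vars <;> (try simp_all) <;> (try ring)
    rw [Finset.sum_congr rfl fun a (_ : a ∈ Finset.univ) =>
      Finset.sum_congr rfl fun b (_ : b ∈ Finset.univ) => hsimp a b]
    simp only [Finset.sum_add_distrib, Finset.sum_ite_eq', Finset.mem_univ, if_true]
    rw [hA.apply i j]
    simp [hij]
    ring


end
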